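/- Let (Q, 𝔫) be a regular local ring of Krull dimension 3 with residue field k, and let 𝔤 ⊆ 𝔫² be an 𝔫-primary ideal minimally generated by elements g_0, …, g_{2m} such that Q/𝔤 has one-dimensional socle (i.e., Q/𝔤 is an artinian Gorenstein local ring). Then the ideal 𝔞 = 𝔫·g_0 + (g_1, …, g_{2m}) is 𝔫-primary and Q/𝔞 has type 2, i.e., dim_k Soc(Q/𝔞) = 2; in particular Q/𝔞 is not Gorenstein. -/

import Mathlib

/-- A commutative Noetherian local ring is *regular* if its maximal ideal can be
generated by `n` elements, where `n` is the Krull dimension of the ring. -/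
def IsRegularLocal (Q : Type*) [CommRing Q] [IsLocalRing Q] : Prop :=
  IsNoetherianRing Q ∧ ∃ (n : ℕ) (f : Fin n → Q),
    Ideal.span (Set.range f) = IsLocalRing.maximalIdeal Q ∧ ringKrullDim Q = n

/-- The socle of the quotient ring `Q ⧸ 𝔞` of a local ring `(Q, 𝔫)` (with `𝔞 ≤ 𝔫`),
namely the annihilator `(0 : 𝔪)` of the maximal ideal `𝔪 = 𝔫(Q ⧸ 𝔞)` of `Q ⧸ 𝔞`. -/
noncomputable def quotSocle {Q : Type*} [CommRing Q] (𝔫 𝔞 : Ideal Q) :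
    Ideal (Q ⧸ 𝔞) :=
  Submodule.annihilator (𝔫.map (Ideal.Quotient.mk 𝔞))

/-! ### Auxiliary theory: annihilators in a local ring -/

open Ideal Submodule IsLocalRing

section AnnI

variable {A : Type*} [CommRing A]

/-- The annihilator of an ideal, as an ideal. -/
noncomputable def annI (I : Ideal A) : Ideal A := Submodule.annihilator I

lemma mem_annI {I : Ideal A} {x : A} : x ∈ annI I ↔ ∀ y ∈ I, x * y = 0 := by
  unfold annI
  rw [Submodule.mem_annihilator]
  simp only [smul_eq_mul]

lemma annI_antitone {I J : Ideal A} (h : I ≤ J) : annI J ≤ annI I := fun x hx =>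
  mem_annI.2 fun y hy => mem_annI.1 hx y (h hy)

lemma le_annI_annI {I : Ideal A} : I ≤ annI (annI I) := fun x hx =>
  mem_annI.2 fun y hy => by rw [mul_comm]; exact mem_annI.1 hy x hx

lemma annI_bot : annI (⊥ : Ideal A) = ⊤ := by
  rw [eq_top_iff]
  intro x _
  exact mem_annI.2 fun y hy => by
    rw [Ideal.mem_bot] at hy; rw [hy, mul_zero]

lemma annI_top : annI (⊤ : Ideal A) = ⊥ := by
  rw [eq_bot_iff]
  intro x hx
  have := mem_annI.1 hx 1 trivial
  rw [mul_one] at this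
  simpa using this

variable [IsLocalRing A]

lemma ann_s_iff {s : A} (hs : s ≠ 0)
    (hsoc : annI (IsLocalRing.maximalIdeal A) = Ideal.span {s}) :
    ∀ c : A, c * s = 0 ↔ c ∈ IsLocalRing.maximalIdeal A := by
  intro c
  constructor
  · intro h
    by_contra hc
    have hu : IsUnit c := IsLocalRing.notMem_maximalIdeal.1 hc
    apply hs
    have h1 : (↑hu.unit⁻¹ : A) * c = 1 := hu.val_inv_mul
    calc s = (↑hu.unit⁻¹ * c) * s := by rw [h1, one_mul]
      _ = ↑hu.unit⁻¹ * (c * s) := by ring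
      _ = 0 := by rw [h, mul_zero]
  · intro hc
    have hsann : s ∈ annI (IsLocalRing.maximalIdeal A) :=
      hsoc ▸ Ideal.mem_span_singleton_self s
    have := mem_annI.1 hsann c hc
    rwa [mul_comm] at this

lemma dd_step {s : A} (hs : s ≠ 0)
    (hsoc : annI (IsLocalRing.maximalIdeal A) = Ideal.span {s})
    (I : Ideal A) (hI : annI (annI I) = I)
    (b : A) (hb : b ∉ I) (hmb : ∀ n ∈ IsLocalRing.maximalIdeal A, n * b ∈ I) :
    annI (annI (I ⊔ Ideal.span {b})) = I ⊔ Ideal.span {b} := by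
  have hanns := ann_s_iff hs hsoc
  have hDIb : ∀ x : A, x ∈ annI (I ⊔ Ideal.span {b}) ↔ x ∈ annI I ∧ x * b = 0 := by
    intro x
    constructor
    · intro hx
      exact ⟨annI_antitone le_sup_left hx,
        mem_annI.1 hx b (Submodule.mem_sup_right (Ideal.mem_span_singleton_self b))⟩
    · rintro ⟨h1, h2⟩
      rw [mem_annI]
      intro y hy
      rcases Submodule.mem_sup.1 hy with ⟨u, hu, v, hv, rfl⟩
      rcases Ideal.mem_span_singleton'.1 hv with ⟨a, rfl⟩
      have hxu : x * u = 0 := mem_annI.1 h1 u hu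
      calc x * (u + a * b) = x * u + a * (x * b) := by ring
        _ = 0 := by rw [hxu, h2, mul_zero, add_zero]
  have hxb_soc : ∀ x ∈ annI I, x * b ∈ Ideal.span {s} := by
    intro x hx
    rw [← hsoc, mem_annI]
    intro n hn
    calc x * b * n = x * (n * b) := by ring
      _ = 0 := mem_annI.1 hx _ (hmb n hn)
  have hex : ¬ ∀ y ∈ annI I, b * y = 0 := fun h => hb (hI ▸ mem_annI.2 h)
  push_neg at hex
  obtain ⟨x₀', hx₀'I, hx₀'b⟩ := hex
  obtain ⟨c, hc⟩ := Ideal.mem_span_singleton'.1 (hxb_soc x₀' hx₀'I)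
  have hcu : IsUnit c := by
    by_contra h
    have hcm : c ∈ IsLocalRing.maximalIdeal A := by
      by_contra h'; exact h (IsLocalRing.notMem_maximalIdeal.1 h')
    apply hx₀'b
    rw [mul_comm, ← hc, (hanns c).2 hcm]
  set x₀ : A := ↑hcu.unit⁻¹ * x₀' with hx₀def
  have hx₀I : x₀ ∈ annI I := Ideal.mul_mem_left _ _ hx₀'I
  have hx₀b : x₀ * b = s := by
    calc x₀ * b = ↑hcu.unit⁻¹ * (x₀' * b) := by rw [hx₀def]; ring
      _ = ↑hcu.unit⁻¹ * (c * s) := by rw [hc]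
      _ = (↑hcu.unit⁻¹ * c) * s := by ring
      _ = s := by rw [hcu.val_inv_mul, one_mul]
  apply le_antisymm _ le_annI_annI
  intro y hy
  have hyx₀ : y * x₀ ∈ Ideal.span {s} := by
    rw [← hsoc, mem_annI]
    intro n hn
    have h1 : n * x₀ ∈ annI I := Ideal.mul_mem_left _ _ hx₀I
    have h2 : (n * x₀) * b = 0 := by
      calc (n * x₀) * b = n * (x₀ * b) := by ring
        _ = n * s := by rw [hx₀b]
        _ = 0 := (hanns n).2 hn
    have h3 : n * x₀ ∈ annI (I ⊔ Ideal.span {b}) := (hDIb _).2 ⟨h1, h2⟩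
    calc y * x₀ * n = y * (n * x₀) := by ring
      _ = 0 := mem_annI.1 hy _ h3
  obtain ⟨c₀, hc₀⟩ := Ideal.mem_span_singleton'.1 hyx₀
  have key : y - c₀ * b ∈ annI (annI I) := by
    rw [mem_annI]
    intro x hx
    obtain ⟨cx, hcx⟩ := Ideal.mem_span_singleton'.1 (hxb_soc x hx)
    have hxd : x - cx * x₀ ∈ annI (I ⊔ Ideal.span {b}) := by
      refine (hDIb _).2 ⟨Submodule.sub_mem _ hx (Ideal.mul_mem_left _ _ hx₀I), ?_⟩
      calc (x - cx * x₀) * b = x * b - cx * (x₀ * b) := by ring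
        _ = 0 := by rw [hx₀b, ← hcx]; ring
    have h0 : y * (x - cx * x₀) = 0 := mem_annI.1 hy _ hxd
    have e1 : y * x = cx * (c₀ * s) := by
      have e : y * x = y * (x - cx * x₀) + cx * (y * x₀) := by ring
      rw [e, h0, hc₀, zero_add]
    have e2 : (c₀ * b) * x = cx * (c₀ * s) := by
      have e : (c₀ * b) * x = c₀ * (x * b) := by ring
      rw [e, ← hcx]; ring
    calc (y - c₀ * b) * x = y * x - (c₀ * b) * x := by ring
      _ = 0 := by rw [e1, e2, sub_self]
  have hyI : y - c₀ * b ∈ I := hI ▸ key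
  have hsplit : y = (y - c₀ * b) + c₀ * b := by ring
  rw [hsplit]
  exact Submodule.add_mem _ (Submodule.mem_sup_left hyI)
    (Submodule.mem_sup_right (Ideal.mem_span_singleton'.2 ⟨c₀, rfl⟩))

/-- Double annihilator property in an artinian noetherian local ring with
1-dimensional socle. -/
theorem dd_all [IsArtinianRing A] [IsNoetherianRing A] {s : A} (hs : s ≠ 0)
    (hsoc : annI (IsLocalRing.maximalIdeal A) = Ideal.span {s}) (I : Ideal A) :
    annI (annI I) = I := by
  induction I using IsArtinian.induction with
  | _ I IH =>
    by_cases hbot : I = ⊥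
    · subst hbot; rw [annI_bot, annI_top]
    · have hwf : WellFounded ((· > ·) : Ideal A → Ideal A → Prop) :=
        isNoetherian_iff.1 (inferInstance : IsNoetherianRing A)
      have hne : {J : Ideal A | J < I}.Nonempty :=
        ⟨⊥, show (⊥ : Ideal A) < I from bot_lt_iff_ne_bot.mpr hbot⟩
      obtain ⟨J, hJI, hJmax'⟩ := hwf.has_min {J : Ideal A | J < I} hne
      have hJmax : ∀ K : Ideal A, J < K → K ≤ I → K = I := by
        intro K hJK hKI
        rcases lt_or_eq_of_le hKI with h | h
        · exact absurd hJK (hJmax' K h)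
        · exact h
      -- maximalIdeal • I ≤ J
      have hmI : IsLocalRing.maximalIdeal A • I ≤ J := by
        by_contra hx
        have hlt : J < J ⊔ IsLocalRing.maximalIdeal A • I := by
          rcases Set.not_subset.1 (fun h => hx h) with ⟨z, hz1, hz2⟩
          exact lt_of_le_of_ne le_sup_left
            (fun e => hz2 (e ▸ Submodule.mem_sup_right hz1))
        have hle : J ⊔ IsLocalRing.maximalIdeal A • I ≤ I :=
          sup_le hJI.le Submodule.smul_le_right
        have heq := hJmax _ hlt hle
        have : I ≤ J ⊔ IsLocalRing.maximalIdeal A • I := heq.ge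
        have := Submodule.le_of_le_smul_of_le_jacobson_bot
          (IsNoetherian.noetherian I) (IsLocalRing.maximalIdeal_le_jacobson ⊥) this
        exact (show J < I from hJI).not_ge this
      obtain ⟨b, hbI, hbJ⟩ := SetLike.exists_of_lt (show J < I from hJI)
      have hIJ : I = J ⊔ Ideal.span {b} := by
        refine (hJmax _ ?_ ?_).symm
        · exact lt_of_le_of_ne le_sup_left
            (fun e => hbJ (e ▸ Submodule.mem_sup_right (Ideal.mem_span_singleton_self b)))
        · exact sup_le hJI.le ((Ideal.span_singleton_le_iff_mem _).2 hbI)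
      have hmb : ∀ n ∈ IsLocalRing.maximalIdeal A, n * b ∈ J := fun n hn =>
        hmI (Submodule.smul_mem_smul hn hbI)
      rw [hIJ]
      exact dd_step hs hsoc J (IH J hJI) b hbJ hmb

end AnnI

/-! ### Artinian-ness of suitable quotients -/

section ArtinianQuot

variable {Q : Type*} [CommRing Q]

lemma isArtinian_of_torsion (𝔫 : Ideal Q) [hmax : 𝔫.IsMaximal]
    {M : Type*} [AddCommGroup M] [Module Q M] [Module.Finite Q M]
    (htor : Module.IsTorsionBySet Q M 𝔫) : IsArtinian Q M := by
  letI : Module (Q ⧸ 𝔫) M := htor.module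
  letI : Field (Q ⧸ 𝔫) := Ideal.Quotient.field 𝔫
  haveI : IsScalarTower Q (Q ⧸ 𝔫) M := htor.isScalarTower
  haveI : Module.Finite (Q ⧸ 𝔫) M := Module.Finite.of_restrictScalars_finite Q (Q ⧸ 𝔫) M
  haveI : IsArtinian (Q ⧸ 𝔫) M := isArtinian_of_fg_of_artinian'
  let f : Submodule Q M → Submodule (Q ⧸ 𝔫) M := fun N =>
    { carrier := (N : Set M)
      add_mem' := fun h1 h2 => N.add_mem h1 h2
      zero_mem' := N.zero_mem
      smul_mem' := by
        intro c x hx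
        obtain ⟨q, rfl⟩ := Ideal.Quotient.mk_surjective c
        show Ideal.Quotient.mk 𝔫 q • x ∈ (N : Set M)
        rw [htor.mk_smul]
        exact N.smul_mem q hx }
  have hf : StrictMono f := by
    intro N N' h
    refine lt_of_le_of_ne (fun x hx => h.le hx) (fun e => h.ne ?_)
    have e' : (f N : Set M) = (f N' : Set M) := congrArg SetLike.coe e
    exact SetLike.coe_injective e'
  exact hf.wellFoundedLT

lemma isArtinianRing_quot_of_pow_le [IsNoetherianRing Q]
    (𝔫 : Ideal Q) [hmax : 𝔫.IsMaximal] (𝔞 : Ideal Q) (k : ℕ) (hk : 𝔫 ^ k ≤ 𝔞) :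
    IsArtinianRing (Q ⧸ 𝔞) := by
  have hQ : ∀ j : ℕ, IsArtinian Q (Q ⧸ (𝔫 ^ j)) := by
    intro j
    induction j with
    | zero =>
      rw [pow_zero, Ideal.one_eq_top]
      haveI : Subsingleton (Q ⧸ (⊤ : Ideal Q)) := by
        constructor
        intro a b
        obtain ⟨x, rfl⟩ := Ideal.Quotient.mk_surjective a
        obtain ⟨y, rfl⟩ := Ideal.Quotient.mk_surjective b
        exact Ideal.Quotient.eq.2 trivial
      infer_instance
    | succ j ih =>
      have hle : (𝔫 ^ (j + 1) : Ideal Q) ≤ 𝔫 ^ j := Ideal.pow_le_pow_right (by omega)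
      set S : Submodule Q (Q ⧸ (𝔫 ^ (j + 1))) :=
        Submodule.map (𝔫 ^ (j + 1) : Ideal Q).mkQ (𝔫 ^ j : Ideal Q) with hS
      haveI hSfin : Module.Finite Q S := by
        rw [Module.Finite.iff_fg]
        exact (IsNoetherian.noetherian (𝔫 ^ j : Ideal Q)).map _
      have htor : Module.IsTorsionBySet Q S 𝔫 := by
        rintro ⟨x, hx⟩ ⟨n, hn⟩
        obtain ⟨z, hz, rfl⟩ := hx
        have : n • ((𝔫 ^ (j + 1) : Ideal Q).mkQ z) = (𝔫 ^ (j + 1) : Ideal Q).mkQ (n • z) :=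
          (map_smul _ _ _).symm
        apply Subtype.ext
        show n • ((𝔫 ^ (j + 1) : Ideal Q).mkQ z) = 0
        rw [this, Submodule.mkQ_apply, Submodule.Quotient.mk_eq_zero]
        have : n * z ∈ 𝔫 * 𝔫 ^ j := Ideal.mul_mem_mul hn hz
        rwa [← pow_succ'] at this
      haveI hSart : IsArtinian Q S := isArtinian_of_torsion 𝔫 htor
      haveI : IsArtinian Q (Q ⧸ (𝔫 ^ j : Ideal Q)) := ih
      have hquot : IsArtinian Q ((Q ⧸ (𝔫 ^ (j + 1) : Ideal Q)) ⧸ S) := by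
        exact isArtinian_of_linearEquiv
          (Submodule.quotientQuotientEquivQuotient _ _ hle).symm
      exact (isArtinian_iff_submodule_quotient S).2 ⟨hSart, hquot⟩
  haveI := hQ k
  have hsurj : IsArtinian Q (Q ⧸ 𝔞) := by
    refine isArtinian_of_surjective _
      (Submodule.mapQ (𝔫 ^ k : Ideal Q) (𝔞 : Submodule Q Q) LinearMap.id ?_) ?_
    · simpa using hk
    · intro y
      obtain ⟨x, rfl⟩ := Ideal.Quotient.mk_surjective y
      exact ⟨Submodule.Quotient.mk x, by simp [Submodule.mapQ_apply]⟩
  exact isArtinian_of_tower Q hsurj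

end ArtinianQuot

/-! ### Translation lemmas for `quotSocle` -/

section QuotSocle

variable {Q : Type*} [CommRing Q]

lemma mem_quotSocle_iff (𝔫 𝔟 : Ideal Q) (x : Q) :
    Ideal.Quotient.mk 𝔟 x ∈ quotSocle 𝔫 𝔟 ↔ ∀ n ∈ 𝔫, n * x ∈ 𝔟 := by
  unfold quotSocle
  rw [Submodule.mem_annihilator]
  constructor
  · intro h n hn
    have := h (Ideal.Quotient.mk 𝔟 n) (Ideal.mem_map_of_mem _ hn)
    rw [smul_eq_mul, ← _root_.map_mul, Ideal.Quotient.eq_zero_iff_mem] at this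
    rwa [mul_comm] at this
  · intro h y hy
    obtain ⟨n, hn, rfl⟩ := Ideal.mem_map_iff_of_surjective _
      Ideal.Quotient.mk_surjective |>.1 hy
    rw [smul_eq_mul, ← _root_.map_mul, Ideal.Quotient.eq_zero_iff_mem, mul_comm]
    exact h n hn

end QuotSocle

/-- Let `(Q, 𝔫)` be a regular local ring of Krull dimension `3` and `𝔤 ⊆ 𝔫²` an
`𝔫`-primary ideal minimally generated by `g 0, …, g 2m` such that `Q ⧸ 𝔤` has
one-dimensional socle (i.e. `Q ⧸ 𝔤` is artinian Gorenstein).  Then the trimmed ideal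
`𝔞 = 𝔫·g 0 + (g 1, …, g 2m)` is `𝔫`-primary and `Q ⧸ 𝔞` has type `2`: its socle has a
`k`-basis of two elements; in particular `Q ⧸ 𝔞` is not Gorenstein (its socle is not
spanned by a single element). -/
theorem trimmed_gorenstein_type_two {Q : Type*} [CommRing Q] [IsLocalRing Q]
    (hreg : IsRegularLocal Q) (hdim : ringKrullDim Q = 3)
    (𝔫 : Ideal Q) (h𝔫 : 𝔫 = IsLocalRing.maximalIdeal Q)
    (m : ℕ) (𝔤 : Ideal Q) (h𝔤𝔫 : 𝔤 ≤ 𝔫 ^ 2) (h𝔤prim : 𝔤.radical = 𝔫)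
    (g : Fin (2 * m + 1) → Q)
    (hgen : Ideal.span (Set.range g) = 𝔤)
    (hmin : ∀ c : Fin (2 * m + 1) → Q, (∑ i, c i * g i) ∈ 𝔫 * 𝔤 → ∀ i, c i ∈ 𝔫)
    (hGor : ∃ w : Q ⧸ 𝔤, w ≠ 0 ∧ quotSocle 𝔫 𝔤 = Ideal.span {w})
    (𝔞 : Ideal Q)
    (h𝔞 : 𝔞 = 𝔫 * Ideal.span {g 0} ⊔
      Ideal.span (Set.range fun i : Fin (2 * m) => g i.succ)) :
    𝔞.radical = 𝔫 ∧
      (∃ v : Fin 2 → Q,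
        quotSocle 𝔫 𝔞 = Ideal.span (Set.range fun i => Ideal.Quotient.mk 𝔞 (v i)) ∧
          ∀ c : Fin 2 → Q, (∑ i, c i * v i) ∈ 𝔞 → ∀ i, c i ∈ 𝔫) ∧
      ¬ ∃ w : Q ⧸ 𝔞, quotSocle 𝔫 𝔞 = Ideal.span {w} := by
  obtain ⟨hnoeth, -⟩ := hreg
  haveI := hnoeth
  -- basic facts
  have h𝔫ne : 𝔫 ≠ ⊤ := h𝔫 ▸ (IsLocalRing.maximalIdeal.isMaximal Q).ne_top
  have hone : (1 : Q) ∉ 𝔫 := fun h => h𝔫ne ((Ideal.eq_top_iff_one 𝔫).2 h)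
  have hunit : ∀ {q : Q}, q ∉ 𝔫 → IsUnit q := fun {q} hq =>
    IsLocalRing.notMem_maximalIdeal.1 (h𝔫 ▸ hq)
  have hdiv : ∀ (J : Ideal Q) (c x : Q), c ∉ 𝔫 → c * x ∈ J → x ∈ J := by
    intro J c x hc hcx
    have hu := hunit hc
    have h1 : (↑hu.unit⁻¹ : Q) * c = 1 := hu.val_inv_mul
    have h2 : x = ↑hu.unit⁻¹ * (c * x) := by rw [← mul_assoc, h1, one_mul]
    rw [h2]
    exact Ideal.mul_mem_left _ _ hcx
  -- 𝔞 ≤ 𝔤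
  have hg0𝔤 : g 0 ∈ 𝔤 := hgen ▸ Ideal.subset_span ⟨0, rfl⟩
  have h𝔞𝔤 : 𝔞 ≤ 𝔤 := by
    rw [h𝔞]
    refine sup_le (le_trans Ideal.mul_le_right ?_) ?_
    · exact (Ideal.span_singleton_le_iff_mem _).2 hg0𝔤
    · rw [Ideal.span_le]
      rintro _ ⟨i, rfl⟩
      exact hgen ▸ Ideal.subset_span ⟨i.succ, rfl⟩
  -- 𝔤 ≤ 𝔞 ⊔ (g 0)
  have h𝔤sup : 𝔤 ≤ 𝔞 ⊔ Ideal.span {g 0} := by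
    rw [← hgen, Ideal.span_le]
    rintro _ ⟨i, rfl⟩
    rcases i.eq_zero_or_eq_succ with h | ⟨j, h⟩
    · rw [h]
      exact Submodule.mem_sup_right (Ideal.mem_span_singleton_self _)
    · rw [h]
      exact Submodule.mem_sup_left (h𝔞 ▸ Submodule.mem_sup_right
        (Ideal.subset_span ⟨j, rfl⟩))
  -- 𝔫 * 𝔤 ≤ 𝔞
  have h𝔫g0 : 𝔫 * Ideal.span {g 0} ≤ 𝔞 := h𝔞 ▸ le_sup_left
  have h𝔫𝔤𝔞 : 𝔫 * 𝔤 ≤ 𝔞 := by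
    calc 𝔫 * 𝔤 ≤ 𝔫 * (𝔞 ⊔ Ideal.span {g 0}) := Ideal.mul_mono_right h𝔤sup
      _ = 𝔫 * 𝔞 ⊔ 𝔫 * Ideal.span {g 0} := Ideal.mul_sup _ _ _
      _ ≤ 𝔞 := sup_le Ideal.mul_le_right h𝔫g0
  -- g 0 ∉ 𝔞
  have hg0 : g 0 ∉ 𝔞 := by
    intro hmem
    rw [h𝔞] at hmem
    obtain ⟨y, hy, z, hz, hyz⟩ := Submodule.mem_sup.1 hmem
    obtain ⟨n, hn, hny⟩ := Ideal.mem_mul_span_singleton.1 hy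
    obtain ⟨d, hd⟩ := Ideal.mem_span_range_iff_exists_fun.1 hz
    set c : Fin (2 * m + 1) → Q := fun i => Fin.cases (1 - n) (fun j => - d j) i with hcdef
    have hsum : ∑ i, c i * g i = 0 := by
      rw [Fin.sum_univ_succ]
      have hc0 : c 0 = 1 - n := rfl
      have hcs : ∀ j : Fin (2 * m), c j.succ = - d j := fun j => rfl
      rw [hc0]
      have : ∑ i : Fin (2 * m), c i.succ * g i.succ
          = - ∑ i : Fin (2 * m), d i * g i.succ := by
        rw [← Finset.sum_neg_distrib]
        exact Finset.sum_congr rfl fun j _ => by rw [hcs j]; ring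
      rw [this, hd]
      linear_combination -hyz - hny
    have h0 : (0 : Q) ∈ 𝔫 * 𝔤 := zero_mem _
    have := hmin c (hsum ▸ h0) 0
    have hc0 : (1 : Q) - n ∈ 𝔫 := this
    have : (1 : Q) ∈ 𝔫 := by
      have := Ideal.add_mem 𝔫 hc0 hn
      simpa using this
    exact hone this
  -- (𝔞 : g 0) ≤ 𝔫
  have hcolon0 : ∀ c : Q, c * g 0 ∈ 𝔞 → c ∈ 𝔫 := by
    intro c hc
    by_contra hcn
    exact hg0 (hdiv 𝔞 c (g 0) hcn hc)
  -- the Gorenstein socle generator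
  obtain ⟨w, hw0, hWsoc⟩ := hGor
  obtain ⟨w', hw'⟩ := Ideal.Quotient.mk_surjective w
  have hw'n : ∀ n ∈ 𝔫, n * w' ∈ 𝔤 := by
    have : Ideal.Quotient.mk 𝔤 w' ∈ quotSocle 𝔫 𝔤 := by
      rw [hWsoc, hw']
      exact Ideal.mem_span_singleton_self w
    exact (mem_quotSocle_iff 𝔫 𝔤 w').1 this
  have hw'g : w' ∉ 𝔤 := fun h =>
    hw0 (hw' ▸ Ideal.Quotient.eq_zero_iff_mem.2 h)
  have hcolonw : ∀ x : Q, (∀ n ∈ 𝔫, n * x ∈ 𝔤) → ∃ c, x - c * w' ∈ 𝔤 := by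
    intro x hx
    have hmem : Ideal.Quotient.mk 𝔤 x ∈ quotSocle 𝔫 𝔤 :=
      (mem_quotSocle_iff 𝔫 𝔤 x).2 hx
    rw [hWsoc] at hmem
    obtain ⟨a, ha⟩ := Ideal.mem_span_singleton'.1 hmem
    obtain ⟨c, rfl⟩ := Ideal.Quotient.mk_surjective a
    refine ⟨c, ?_⟩
    rw [← Ideal.Quotient.eq_zero_iff_mem]
    rw [_root_.map_sub, _root_.map_mul, hw', ha, sub_self]
  -- g 0 multiples in socle
  have hg0soc : ∀ n ∈ 𝔫, n * g 0 ∈ 𝔞 :=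
    fun n hn => h𝔫g0 (Ideal.mul_mem_mul hn (Ideal.mem_span_singleton_self _))
  -- first conjunct
  have hrad : 𝔞.radical = 𝔫 := by
    apply le_antisymm
    · calc 𝔞.radical ≤ 𝔤.radical := Ideal.radical_mono h𝔞𝔤
        _ = 𝔫 := h𝔤prim
    · intro n hn
      have : n ∈ 𝔤.radical := h𝔤prim ▸ hn
      obtain ⟨k, hk⟩ := this
      exact ⟨k + 1, by
        rw [pow_succ]
        exact h𝔫𝔤𝔞 (mul_comm 𝔫 𝔤 ▸ Ideal.mul_mem_mul hk hn)⟩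
  -- case split
  by_cases hcA : ∀ n ∈ 𝔫, n * w' ∈ 𝔞
  · -- CASE A : the socle is spanned by g 0 and w'
    have hsup𝔤 : 𝔞 ⊔ Ideal.span {g 0} ≤ 𝔤 :=
      sup_le h𝔞𝔤 ((Ideal.span_singleton_le_iff_mem _).2 hg0𝔤)
    have hw'𝔞 : w' ∉ 𝔞 ⊔ Ideal.span {g 0} := fun h => hw'g (hsup𝔤 h)
    have hminv : ∀ c : Fin 2 → Q,
        (∑ i, c i * (![g 0, w'] : Fin 2 → Q) i) ∈ 𝔞 → ∀ i, c i ∈ 𝔫 := by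
      intro c hc
      rw [Fin.sum_univ_two] at hc
      simp only [Matrix.cons_val_zero, Matrix.cons_val_one, Matrix.head_cons] at hc
      have hc1 : c 1 ∈ 𝔫 := by
        by_contra h1
        apply hw'𝔞
        have hmem : c 1 * w' ∈ 𝔞 ⊔ Ideal.span {g 0} := by
          have e : c 1 * w' = (c 0 * g 0 + c 1 * w') - c 0 * g 0 := by ring
          rw [e]
          exact Submodule.sub_mem _ (Submodule.mem_sup_left hc)
            (Submodule.mem_sup_right
              (Ideal.mul_mem_left _ _ (Ideal.mem_span_singleton_self _)))
        exact hdiv _ (c 1) w' h1 hmem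
      have hc1' : c 1 * w' ∈ 𝔞 := hcA (c 1) hc1
      have hc0' : c 0 ∈ 𝔫 := by
        apply hcolon0
        have e : c 0 * g 0 = (c 0 * g 0 + c 1 * w') - c 1 * w' := by ring
        rw [e]
        exact Submodule.sub_mem _ hc hc1'
      intro i
      fin_cases i
      · exact hc0'
      · exact hc1
    have hspan : quotSocle 𝔫 𝔞
        = Ideal.span (Set.range fun i => Ideal.Quotient.mk 𝔞 ((![g 0, w'] : Fin 2 → Q) i)) := by
      apply le_antisymm
      · intro ξ hξ
        obtain ⟨x, rfl⟩ := Ideal.Quotient.mk_surjective ξ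
        have hx : ∀ n ∈ 𝔫, n * x ∈ 𝔞 := (mem_quotSocle_iff 𝔫 𝔞 x).1 hξ
        obtain ⟨c, hcg⟩ := hcolonw x (fun n hn => h𝔞𝔤 (hx n hn))
        obtain ⟨a, ha, e, he, hae⟩ := Submodule.mem_sup.1 (h𝔤sup hcg)
        obtain ⟨d, hd⟩ := Ideal.mem_span_singleton'.1 he
        have hx' : x = a + d * g 0 + c * w' := by linear_combination -hae - hd
        set T := Ideal.span (Set.range fun i =>
          Ideal.Quotient.mk 𝔞 ((![g 0, w'] : Fin 2 → Q) i)) with hT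
        have hg0T : Ideal.Quotient.mk 𝔞 (g 0) ∈ T := Ideal.subset_span ⟨0, by simp⟩
        have hw'T : Ideal.Quotient.mk 𝔞 w' ∈ T := Ideal.subset_span ⟨1, by simp⟩
        have hxe : Ideal.Quotient.mk 𝔞 x
            = Ideal.Quotient.mk 𝔞 d * Ideal.Quotient.mk 𝔞 (g 0)
              + Ideal.Quotient.mk 𝔞 c * Ideal.Quotient.mk 𝔞 w' := by
          rw [hx', _root_.map_add, _root_.map_add, _root_.map_mul, _root_.map_mul,
            Ideal.Quotient.eq_zero_iff_mem.2 ha, zero_add]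
        rw [hxe]
        exact T.add_mem (T.mul_mem_left _ hg0T) (T.mul_mem_left _ hw'T)
      · rw [Ideal.span_le]
        rintro _ ⟨i, rfl⟩
        fin_cases i
        · simpa using (mem_quotSocle_iff 𝔫 𝔞 (g 0)).2 hg0soc
        · simpa using (mem_quotSocle_iff 𝔫 𝔞 w').2 hcA
    refine ⟨hrad, ⟨![g 0, w'], hspan, hminv⟩, ?_⟩
    rintro ⟨w₀, hw₀⟩
    have hg0s : Ideal.Quotient.mk 𝔞 (g 0) ∈ Ideal.span {w₀} := by
      rw [← hw₀]
      exact (mem_quotSocle_iff 𝔫 𝔞 (g 0)).2 hg0soc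
    obtain ⟨a, ha⟩ := Ideal.mem_span_singleton'.1 hg0s
    obtain ⟨q, rfl⟩ := Ideal.Quotient.mk_surjective a
    obtain ⟨t, ht⟩ := Ideal.Quotient.mk_surjective w₀
    have htsoc : ∀ n ∈ 𝔫, n * t ∈ 𝔞 := by
      have hmem : Ideal.Quotient.mk 𝔞 t ∈ quotSocle 𝔫 𝔞 := by
        rw [hw₀, ht]; exact Ideal.mem_span_singleton_self w₀
      exact (mem_quotSocle_iff 𝔫 𝔞 t).1 hmem
    by_cases hq : q ∈ 𝔫
    · apply hg0
      have h0 : Ideal.Quotient.mk 𝔞 q * w₀ = 0 := by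
        rw [← ht, ← _root_.map_mul, Ideal.Quotient.eq_zero_iff_mem]
        exact htsoc q hq
      rw [← Ideal.Quotient.eq_zero_iff_mem, ← ha, h0]
    · have hw's : Ideal.Quotient.mk 𝔞 w' ∈ Ideal.span {w₀} := by
        rw [← hw₀]
        exact (mem_quotSocle_iff 𝔫 𝔞 w').2 hcA
      obtain ⟨b, hb⟩ := Ideal.mem_span_singleton'.1 hw's
      obtain ⟨r, rfl⟩ := Ideal.Quotient.mk_surjective b
      have hqr : q * w' - r * g 0 ∈ 𝔞 := by
        rw [← Ideal.Quotient.eq_zero_iff_mem, _root_.map_sub, _root_.map_mul,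
          _root_.map_mul, ← hb, ← ha]
        ring
      have hq𝔫 := hminv ![-r, q] (by
        rw [Fin.sum_univ_two]
        simp only [Matrix.cons_val_zero, Matrix.cons_val_one, Matrix.head_cons]
        have e : -r * g 0 + q * w' = q * w' - r * g 0 := by ring
        rw [e]; exact hqr) 1
      simp only [Matrix.cons_val_one, Matrix.head_cons] at hq𝔫
      exact hq hq𝔫
  · -- CASE B : impossible
    exfalso
    push_neg at hcA
    obtain ⟨n0, hn0𝔫, hn0⟩ := hcA
    -- socle of Q⧸𝔞 is spanned by g 0 alone
    have hB1 : ∀ x : Q, (∀ n ∈ 𝔫, n * x ∈ 𝔞) → x ∈ 𝔞 ⊔ Ideal.span {g 0} := by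
      intro x hx
      obtain ⟨c, hc⟩ := hcolonw x (fun n hn => h𝔞𝔤 (hx n hn))
      have h4 : n0 * (x - c * w') ∈ 𝔞 := h𝔫𝔤𝔞 (Ideal.mul_mem_mul hn0𝔫 hc)
      have h5 : c * (n0 * w') ∈ 𝔞 := by
        have e : c * (n0 * w') = n0 * x - n0 * (x - c * w') := by ring
        rw [e]
        exact Submodule.sub_mem _ (hx n0 hn0𝔫) h4
      obtain ⟨a, ha, e, he, hae⟩ := Submodule.mem_sup.1 (h𝔤sup (hw'n n0 hn0𝔫))
      obtain ⟨d, hd⟩ := Ideal.mem_span_singleton'.1 he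
      have hd𝔫 : d ∉ 𝔫 := by
        intro hdm
        apply hn0
        have hdg : d * g 0 ∈ 𝔞 :=
          h𝔫g0 (Ideal.mul_mem_mul hdm (Ideal.mem_span_singleton_self _))
        rw [← hae, ← hd]
        exact Submodule.add_mem _ ha hdg
      have h7 : (c * d) * g 0 ∈ 𝔞 := by
        have e2 : (c * d) * g 0 = c * (n0 * w') - c * a := by
          linear_combination c * hae + c * hd
        rw [e2]
        exact Submodule.sub_mem _ h5 (Ideal.mul_mem_left _ _ ha)
      have h8 : c * d ∈ 𝔫 := hcolon0 _ h7
      have hc𝔫 : c ∈ 𝔫 := by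
        by_contra hcn
        obtain ⟨u, hu⟩ := (hunit hcn).mul (hunit hd𝔫)
        apply hone
        have h1 : (↑u⁻¹ : Q) * (c * d) = 1 := by rw [← hu]; exact u.inv_mul
        rw [← h1]
        exact Ideal.mul_mem_left _ _ h8
      have hcw : c * w' ∈ 𝔤 := hw'n c hc𝔫
      have hx𝔤 : x ∈ 𝔤 := by
        have e3 : x = (x - c * w') + c * w' := by ring
        rw [e3]
        exact Submodule.add_mem _ hc hcw
      exact h𝔤sup hx𝔤
    -- the quotient ring Q⧸𝔞 is artinian local
    have h𝔞𝔫2 : 𝔞 ≤ 𝔫 ^ 2 := le_trans h𝔞𝔤 h𝔤𝔫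
    have h𝔫2𝔫 : 𝔫 ^ 2 ≤ 𝔫 := Ideal.pow_le_self two_ne_zero
    have h𝔞𝔫 : 𝔞 ≤ 𝔫 := le_trans h𝔞𝔫2 h𝔫2𝔫
    have h𝔞ne : 𝔞 ≠ ⊤ := fun h => hone (h𝔞𝔫 (h ▸ Submodule.mem_top))
    haveI : Nontrivial (Q ⧸ 𝔞) := Ideal.Quotient.nontrivial_iff.mpr h𝔞ne
    haveI : IsLocalRing (Q ⧸ 𝔞) :=
      IsLocalRing.of_surjective' (Ideal.Quotient.mk 𝔞) Ideal.Quotient.mk_surjective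
    haveI h𝔫max : 𝔫.IsMaximal := by rw [h𝔫]; infer_instance
    obtain ⟨k, hk⟩ := Ideal.exists_radical_pow_le_of_fg 𝔞 (IsNoetherian.noetherian _)
    rw [hrad] at hk
    haveI : IsArtinianRing (Q ⧸ 𝔞) := isArtinianRing_quot_of_pow_le 𝔫 𝔞 k hk
    -- the maximal ideal of Q⧸𝔞
    have hmapmax : 𝔫.map (Ideal.Quotient.mk 𝔞) = IsLocalRing.maximalIdeal (Q ⧸ 𝔞) := by
      apply le_antisymm
      · rw [Ideal.map_le_iff_le_comap]
        intro x hx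
        rw [Ideal.mem_comap, IsLocalRing.mem_maximalIdeal, mem_nonunits_iff]
        intro hu
        obtain ⟨y, hy⟩ := isUnit_iff_exists_inv.1 hu
        obtain ⟨z, rfl⟩ := Ideal.Quotient.mk_surjective y
        have hxz : x * z - 1 ∈ 𝔞 := by
          rw [← Ideal.Quotient.eq_zero_iff_mem, _root_.map_sub, _root_.map_mul,
            _root_.map_one, hy, sub_self]
        apply hone
        have h1 : (1 : Q) = x * z - (x * z - 1) := by ring
        rw [h1]
        exact Submodule.sub_mem _ (Ideal.mul_mem_right _ _ hx) (h𝔞𝔫 hxz)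
      · intro ξ hξ
        obtain ⟨x, rfl⟩ := Ideal.Quotient.mk_surjective ξ
        by_cases hx : x ∈ 𝔫
        · exact Ideal.mem_map_of_mem _ hx
        · exact absurd ((hunit hx).map (Ideal.Quotient.mk 𝔞))
            (mem_nonunits_iff.1 ((IsLocalRing.mem_maximalIdeal _).1 hξ))
    have hmemmax : ∀ ξ : Q ⧸ 𝔞, ξ ∈ IsLocalRing.maximalIdeal (Q ⧸ 𝔞) ↔
        ∃ q ∈ 𝔫, Ideal.Quotient.mk 𝔞 q = ξ := by
      intro ξ
      rw [← hmapmax]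
      exact Ideal.mem_map_iff_of_surjective _ Ideal.Quotient.mk_surjective
    -- socle data
    set s : Q ⧸ 𝔞 := Ideal.Quotient.mk 𝔞 (g 0) with hsdef
    have hs0 : s ≠ 0 := fun h => hg0 (Ideal.Quotient.eq_zero_iff_mem.1 h)
    have hsocA : annI (IsLocalRing.maximalIdeal (Q ⧸ 𝔞)) = Ideal.span {s} := by
      have hrfl : annI (IsLocalRing.maximalIdeal (Q ⧸ 𝔞)) = quotSocle 𝔫 𝔞 := by
        rw [← hmapmax]; rfl
      rw [hrfl]
      apply le_antisymm
      · intro ξ hξ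
        obtain ⟨x, rfl⟩ := Ideal.Quotient.mk_surjective ξ
        obtain ⟨a, ha, e, he, hae⟩ :=
          Submodule.mem_sup.1 (hB1 x ((mem_quotSocle_iff 𝔫 𝔞 x).1 hξ))
        obtain ⟨d, hd⟩ := Ideal.mem_span_singleton'.1 he
        refine Ideal.mem_span_singleton'.2 ⟨Ideal.Quotient.mk 𝔞 d, ?_⟩
        rw [hsdef, ← _root_.map_mul]
        apply Ideal.Quotient.eq.2
        have e2 : d * g 0 - x = -a := by linear_combination hd + hae
        rw [e2]
        exact Submodule.neg_mem _ ha
      · rw [Ideal.span_le, Set.singleton_subset_iff]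
        exact (mem_quotSocle_iff 𝔫 𝔞 (g 0)).2 hg0soc
    have hDD := dd_all hs0 hsocA
    have hannA : ∀ c : Q ⧸ 𝔞, c * s = 0 ↔ c ∈ IsLocalRing.maximalIdeal (Q ⧸ 𝔞) :=
      ann_s_iff hs0 hsocA
    set t : Q ⧸ 𝔞 := Ideal.Quotient.mk 𝔞 w' with htdef
    have ht0 : t ≠ 0 := fun h => hw'g (h𝔞𝔤 (Ideal.Quotient.eq_zero_iff_mem.1 h))
    have hts : ∀ ν ∈ IsLocalRing.maximalIdeal (Q ⧸ 𝔞), ν * t ∈ Ideal.span {s} := by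
      intro ν hν
      obtain ⟨q, hq, rfl⟩ := (hmemmax ν).1 hν
      obtain ⟨a, ha, e, he, hae⟩ := Submodule.mem_sup.1 (h𝔤sup (hw'n q hq))
      obtain ⟨d, hd⟩ := Ideal.mem_span_singleton'.1 he
      refine Ideal.mem_span_singleton'.2 ⟨Ideal.Quotient.mk 𝔞 d, ?_⟩
      rw [hsdef, htdef, ← _root_.map_mul, ← _root_.map_mul]
      apply Ideal.Quotient.eq.2
      have e2 : d * g 0 - q * w' = -a := by linear_combination hd + hae
      rw [e2]
      exact Submodule.neg_mem _ ha
    -- the annihilator of t is contained in 𝔪²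
    have hKm2 : ∀ ν : Q ⧸ 𝔞, ν * t = 0 →
        ν ∈ (IsLocalRing.maximalIdeal (Q ⧸ 𝔞)) ^ 2 := by
      intro n hn
      have hS2 : annI ((IsLocalRing.maximalIdeal (Q ⧸ 𝔞)) ^ 2)
          = Ideal.span {s} ⊔ Ideal.span {t} := by
        apply le_antisymm
        · intro x hx
          obtain ⟨z, rfl⟩ := Ideal.Quotient.mk_surjective x
          have hz : ∀ q ∈ 𝔫, q * z ∈ 𝔤 := by
            intro q hq
            have hqz : Ideal.Quotient.mk 𝔞 q * Ideal.Quotient.mk 𝔞 z ∈ Ideal.span {s} := by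
              rw [← hsocA, mem_annI]
              intro μ hμ
              have hμq : μ * Ideal.Quotient.mk 𝔞 q
                  ∈ (IsLocalRing.maximalIdeal (Q ⧸ 𝔞)) ^ 2 := by
                rw [sq]
                exact Ideal.mul_mem_mul hμ ((hmemmax _).2 ⟨q, hq, rfl⟩)
              calc Ideal.Quotient.mk 𝔞 q * Ideal.Quotient.mk 𝔞 z * μ
                  = Ideal.Quotient.mk 𝔞 z * (μ * Ideal.Quotient.mk 𝔞 q) := by ring
                _ = 0 := mem_annI.1 hx _ hμq
            obtain ⟨a, ha⟩ := Ideal.mem_span_singleton'.1 hqz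
            obtain ⟨b, rfl⟩ := Ideal.Quotient.mk_surjective a
            have hbq : b * g 0 - q * z ∈ 𝔞 := by
              apply Ideal.Quotient.eq.1
              rw [_root_.map_mul, _root_.map_mul, ← hsdef]
              exact ha
            have e3 : q * z = b * g 0 - (b * g 0 - q * z) := by ring
            rw [e3]
            exact Submodule.sub_mem _ (Ideal.mul_mem_left _ _ hg0𝔤) (h𝔞𝔤 hbq)
          obtain ⟨c, hc⟩ := hcolonw z hz
          obtain ⟨a, ha, e, he, hae⟩ := Submodule.mem_sup.1 (h𝔤sup hc)
          obtain ⟨d, hd⟩ := Ideal.mem_span_singleton'.1 he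
          have hzeq : Ideal.Quotient.mk 𝔞 z
              = Ideal.Quotient.mk 𝔞 d * s + Ideal.Quotient.mk 𝔞 c * t := by
            rw [hsdef, htdef, ← _root_.map_mul, ← _root_.map_mul, ← _root_.map_add]
            apply Ideal.Quotient.eq.2
            have e4 : z - (d * g 0 + c * w') = a := by linear_combination -hae - hd
            rw [e4]; exact ha
          rw [hzeq]
          exact Submodule.add_mem _
            (Submodule.mem_sup_left (Ideal.mul_mem_left _ _ (Ideal.mem_span_singleton_self s)))
            (Submodule.mem_sup_right (Ideal.mul_mem_left _ _ (Ideal.mem_span_singleton_self t)))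
        · refine sup_le ?_ ?_
          · rw [Ideal.span_le, Set.singleton_subset_iff]
            show s ∈ annI _
            rw [mem_annI]
            intro y hy
            have hy' : y ∈ IsLocalRing.maximalIdeal (Q ⧸ 𝔞) :=
              (Ideal.pow_le_self two_ne_zero) hy
            rw [mul_comm]
            exact (hannA y).2 hy'
          · rw [Ideal.span_le, Set.singleton_subset_iff]
            show t ∈ annI _
            have hmm : (IsLocalRing.maximalIdeal (Q ⧸ 𝔞)) * (IsLocalRing.maximalIdeal (Q ⧸ 𝔞))
                ≤ annI (Ideal.span {t}) := by
              rw [Ideal.mul_le]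
              intro r hr p hp
              rw [mem_annI]
              intro y' hy'
              obtain ⟨e', rfl⟩ := Ideal.mem_span_singleton'.1 hy'
              obtain ⟨f, hf⟩ := Ideal.mem_span_singleton'.1 (hts p hp)
              calc r * p * (e' * t) = e' * r * (p * t) := by ring
                _ = e' * r * (f * s) := by rw [← hf]
                _ = e' * f * (r * s) := by ring
                _ = 0 := by rw [(hannA r).2 hr, mul_zero]
            rw [mem_annI]
            intro y hy
            rw [sq] at hy
            have h2 : y * t = 0 :=
              mem_annI.1 (hmm hy) t (Ideal.mem_span_singleton_self t)
            rw [mul_comm]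
            exact h2
      have hnm : n ∈ IsLocalRing.maximalIdeal (Q ⧸ 𝔞) := by
        by_contra h
        have hu : IsUnit n := IsLocalRing.notMem_maximalIdeal.1 h
        apply ht0
        have h1 : (↑hu.unit⁻¹ : Q ⧸ 𝔞) * n = 1 := hu.val_inv_mul
        calc t = (↑hu.unit⁻¹ * n) * t := by rw [h1, one_mul]
          _ = ↑hu.unit⁻¹ * (n * t) := by ring
          _ = 0 := by rw [hn, mul_zero]
      set J : Ideal (Q ⧸ 𝔞) :=
        (IsLocalRing.maximalIdeal (Q ⧸ 𝔞)) ^ 2 ⊔ Ideal.span {n} with hJ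
      have hDJ : annI J = annI ((IsLocalRing.maximalIdeal (Q ⧸ 𝔞)) ^ 2) := by
        apply le_antisymm (annI_antitone le_sup_left)
        intro x hx
        rw [mem_annI]
        intro y hy
        rcases Submodule.mem_sup.1 hy with ⟨u, hu, v, hv, rfl⟩
        rcases Ideal.mem_span_singleton'.1 hv with ⟨e', rfl⟩
        have h1 : x * u = 0 := mem_annI.1 hx u hu
        have h2 : x * n = 0 := by
          have hx2 : x ∈ Ideal.span {s} ⊔ Ideal.span {t} := hS2 ▸ hx
          rcases Submodule.mem_sup.1 hx2 with ⟨p, hp, r, hr, rfl⟩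
          rcases Ideal.mem_span_singleton'.1 hp with ⟨α, rfl⟩
          rcases Ideal.mem_span_singleton'.1 hr with ⟨β, rfl⟩
          have hsn : s * n = 0 := by rw [mul_comm]; exact (hannA n).2 hnm
          calc (α * s + β * t) * n = α * (s * n) + β * (n * t) := by ring
            _ = 0 := by rw [hsn, hn, mul_zero, mul_zero, add_zero]
        calc x * (u + e' * n) = x * u + e' * (x * n) := by ring
          _ = 0 := by rw [h1, h2, mul_zero, add_zero]
      have hJeq : J = (IsLocalRing.maximalIdeal (Q ⧸ 𝔞)) ^ 2 := by
        conv_lhs => rw [← hDD J]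
        rw [hDJ, hDD]
      exact hJeq ▸ Submodule.mem_sup_right (Ideal.mem_span_singleton_self n)
    -- a single generator for 𝔫 modulo 𝔫²
    have hpull : ∀ x : Q,
        Ideal.Quotient.mk 𝔞 x ∈ (IsLocalRing.maximalIdeal (Q ⧸ 𝔞)) ^ 2 → x ∈ 𝔫 ^ 2 := by
      intro x hx
      have h2 : (IsLocalRing.maximalIdeal (Q ⧸ 𝔞)) ^ 2
          = Ideal.map (Ideal.Quotient.mk 𝔞) (𝔫 ^ 2) := by
        rw [Ideal.map_pow, hmapmax]
      rw [h2] at hx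
      obtain ⟨z, hz, hzz⟩ :=
        (Ideal.mem_map_iff_of_surjective _ Ideal.Quotient.mk_surjective).1 hx
      have hxz : z - x ∈ 𝔞 := Ideal.Quotient.eq.1 hzz
      have e : x = z - (z - x) := by ring
      rw [e]
      exact Submodule.sub_mem _ hz (h𝔞𝔫2 hxz)
    have hτ : ∃ τ ∈ 𝔫, ∀ q ∈ 𝔫, q ∈ 𝔫 ^ 2 ⊔ Ideal.span {τ} := by
      by_cases hall : ∀ ν ∈ IsLocalRing.maximalIdeal (Q ⧸ 𝔞), ν * t = 0
      · refine ⟨0, zero_mem _, fun q hq => ?_⟩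
        have hq2 : Ideal.Quotient.mk 𝔞 q ∈ (IsLocalRing.maximalIdeal (Q ⧸ 𝔞)) ^ 2 :=
          hKm2 _ (hall _ ((hmemmax _).2 ⟨q, hq, rfl⟩))
        exact Submodule.mem_sup_left (hpull q hq2)
      · push_neg at hall
        obtain ⟨ν1, hν1m, hν1⟩ := hall
        obtain ⟨c, hc⟩ := Ideal.mem_span_singleton'.1 (hts ν1 hν1m)
        have hcu : IsUnit c := by
          by_contra h
          have hcm : c ∈ IsLocalRing.maximalIdeal (Q ⧸ 𝔞) := by
            by_contra h'; exact h (IsLocalRing.notMem_maximalIdeal.1 h')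
          exact hν1 (by rw [← hc, (hannA c).2 hcm])
        obtain ⟨q1, hq1, hq1e⟩ := (hmemmax ν1).1 hν1m
        refine ⟨q1, hq1, fun q hq => ?_⟩
        obtain ⟨a, ha⟩ := Ideal.mem_span_singleton'.1
          (hts (Ideal.Quotient.mk 𝔞 q) ((hmemmax _).2 ⟨q, hq, rfl⟩))
        set ci : Q ⧸ 𝔞 := ↑hcu.unit⁻¹ with hci
        have hker : (Ideal.Quotient.mk 𝔞 q - a * ci * ν1) * t = 0 := by
          have h1 : ci * c = 1 := hcu.val_inv_mul
          calc (Ideal.Quotient.mk 𝔞 q - a * ci * ν1) * t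
              = Ideal.Quotient.mk 𝔞 q * t - a * ci * (ν1 * t) := by ring
            _ = a * s - a * ci * (c * s) := by rw [ha, ← hc]
            _ = a * s - a * ((ci * c) * s) := by ring
            _ = 0 := by rw [h1, one_mul, sub_self]
        have hq2 := hKm2 _ hker
        obtain ⟨ρ, hρ⟩ := Ideal.Quotient.mk_surjective (a * ci)
        have hx2 : Ideal.Quotient.mk 𝔞 (q - ρ * q1)
            ∈ (IsLocalRing.maximalIdeal (Q ⧸ 𝔞)) ^ 2 := by
          have e : Ideal.Quotient.mk 𝔞 (q - ρ * q1)
              = Ideal.Quotient.mk 𝔞 q - a * ci * ν1 := by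
            rw [_root_.map_sub, _root_.map_mul, hρ, hq1e]
          rw [e]; exact hq2
        have hmem2 : q - ρ * q1 ∈ 𝔫 ^ 2 := hpull _ hx2
        have e : q = (q - ρ * q1) + ρ * q1 := by ring
        rw [e]
        exact Submodule.add_mem _ (Submodule.mem_sup_left hmem2)
          (Submodule.mem_sup_right (Ideal.mul_mem_left _ _ (Ideal.mem_span_singleton_self _)))
    obtain ⟨τ, hτ𝔫, hτall⟩ := hτ
    have hjac : 𝔫 ≤ Ideal.jacobson ⊥ := by
      rw [h𝔫]; exact IsLocalRing.maximalIdeal_le_jacobson ⊥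
    have h𝔫τ : 𝔫 ≤ Ideal.span {τ} := by
      apply Submodule.le_of_le_smul_of_le_jacobson_bot (IsNoetherian.noetherian 𝔫) hjac
      intro q hq
      rcases Submodule.mem_sup.1 (hτall q hq) with ⟨u, hu, v, hv, rfl⟩
      refine Submodule.mem_sup.2 ⟨v, hv, u, ?_, add_comm v u⟩
      rw [Ideal.smul_eq_mul]
      rwa [sq] at hu
    have hprime : ∀ P : Ideal Q, P.IsPrime → P < 𝔫 → P = ⊥ := by
      intro P hP hPlt
      have hτP : τ ∉ P := by
        intro h
        exact absurd (le_trans h𝔫τ ((Ideal.span_singleton_le_iff_mem _).2 h))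
          (not_le_of_gt hPlt)
      apply Submodule.eq_bot_of_le_smul_of_le_jacobson_bot 𝔫 P
        (IsNoetherian.noetherian P) ?_ hjac
      intro z hz
      obtain ⟨cz, hcz⟩ := Ideal.mem_span_singleton'.1 (h𝔫τ (hPlt.le hz))
      have hczP : cz ∈ P := by
        rcases hP.mem_or_mem (show cz * τ ∈ P from hcz ▸ hz) with h | h
        · exact h
        · exact absurd h hτP
      have e : z = τ * cz := by rw [← hcz]; ring
      rw [e, Ideal.smul_eq_mul]
      exact Ideal.mul_mem_mul hτ𝔫 hczP
    have hchain : ∃ p : LTSeries (PrimeSpectrum Q), 3 ≤ p.length := by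
      by_contra hno
      push_neg at hno
      have hle : ringKrullDim Q ≤ ((2 : ℕ) : WithBot (WithTop ℕ)) := by
        show Order.krullDim (PrimeSpectrum Q) ≤ ((2 : ℕ) : WithBot (WithTop ℕ))
        refine iSup_le fun p => ?_
        have hp : p.length ≤ 2 := by
          have := hno p; omega
        exact (by exact_mod_cast hp : (p.length : WithBot ℕ∞) ≤ ((2:ℕ) : WithBot ℕ∞))
      rw [hdim] at hle
      norm_num at hle
      exact absurd (show ((3:ℕ) : WithBot ℕ∞) ≤ ((2:ℕ) : WithBot ℕ∞) from hle) (by norm_num)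
    obtain ⟨p, hp⟩ := hchain
    have hilt : ∀ x y : PrimeSpectrum Q, x < y → x.asIdeal < y.asIdeal := by
      intro x y h
      refine lt_of_le_of_ne h.le fun e => h.ne ?_
      exact PrimeSpectrum.ext e
    have hlt12 : p.toFun ⟨1, by omega⟩ < p.toFun ⟨2, by omega⟩ :=
      p.strictMono (Fin.mk_lt_mk.2 (by omega))
    have hlt23 : p.toFun ⟨2, by omega⟩ < p.toFun ⟨3, by omega⟩ :=
      p.strictMono (Fin.mk_lt_mk.2 (by omega))
    have h2bot : (p.toFun ⟨2, by omega⟩).asIdeal = ⊥ := by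
      apply hprime _ (p.toFun ⟨2, by omega⟩).isPrime
      have hlt : (p.toFun ⟨2, by omega⟩).asIdeal < (p.toFun ⟨3, by omega⟩).asIdeal :=
        hilt _ _ hlt23
      have hle3 : (p.toFun ⟨3, by omega⟩).asIdeal ≤ 𝔫 := by
        rw [h𝔫]
        exact IsLocalRing.le_maximalIdeal (p.toFun ⟨3, by omega⟩).isPrime.ne_top
      exact lt_of_lt_of_le hlt hle3
    have hfinal := hilt _ _ hlt12
    rw [h2bot] at hfinal
    exact not_lt_bot hfinal
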